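/- For every α > 0 the following holds. Let H be an α-robust graph on n ≥ 2 vertices with 10·log(n)/(α·n) ≤ 1, and let F be the random subgraph of H in which each edge of H is included independently with probability 10·log(n)/(α·n). Then with probability at least 1 − 2n^{−3}, the graph F is connected. -/

import Mathlib

open MeasureTheory

/-- The Bernoulli measure on `Bool` with success probability `p` (for `p ∈ [0,1]`). -/
noncomputable def bernoulliMeasure (p : ℝ) : Measure Bool :=
  (ENNReal.ofReal p) • Measure.dirac true + (1 - ENNReal.ofReal p) • Measure.dirac false

/-- The crossing edges of `G` between `U` and its complement, recorded as ordered pairs with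
first coordinate in `U`; each crossing edge corresponds to exactly one such pair. -/
def crossPairs {V : Type*} (G : SimpleGraph V) (U : Set V) : Set (V × V) :=
  {p : V × V | p.1 ∈ U ∧ p.2 ∉ U ∧ G.Adj p.1 p.2}

/-- An `n`-vertex graph `G` is `ρ`-robust if for every `U ⊆ V(G)` the number of edges of `G`
between `U` and its complement is at least `ρ·|U|·(n−|U|)`. -/
def IsRobust {V : Type*} [Fintype V] (ρ : ℝ) (G : SimpleGraph V) : Prop :=
  ∀ U : Set V,
    ρ * (Nat.card U : ℝ) * ((Fintype.card V : ℝ) - (Nat.card U : ℝ))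
      ≤ (Nat.card (crossPairs G U) : ℝ)

/-- The graph on `V` whose edges are the elements of `S` selected by `ω`. -/
def selectGraph {V : Type*} (S : Set (Sym2 V)) (ω : Sym2 V → Bool) : SimpleGraph V where
  Adj a b := a ≠ b ∧ s(a, b) ∈ S ∧ ω s(a, b) = true
  symm := by
    constructor
    intro a b h
    refine ⟨h.1.symm, ?_, ?_⟩ <;> rw [Sym2.eq_swap]
    exacts [h.2.1, h.2.2]
  loopless := ⟨fun a h => h.1 rfl⟩

lemma bernoulli_false {p : ℝ} (h0 : 0 ≤ p) (h1 : p ≤ 1) :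
    bernoulliMeasure p {false} = ENNReal.ofReal (1 - p) := by
  simp [bernoulliMeasure, Measure.dirac_apply]
  rw [ENNReal.ofReal_sub _ h0] <;> simp

lemma bernoulli_isProb {p : ℝ} (h0 : 0 ≤ p) (h1 : p ≤ 1) :
    IsProbabilityMeasure (bernoulliMeasure p) := by
  constructor
  simp [bernoulliMeasure]
  rw [← ENNReal.ofReal_one, ← ENNReal.ofReal_sub _ h0, ← ENNReal.ofReal_add h0 (by linarith)]
  simp
open Classical in
lemma pi_allFalse {ι : Type*} [Fintype ι] (μ : ι → Measure Bool)
    [∀ i, IsProbabilityMeasure (μ i)] (T : Finset ι) :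
    Measure.pi μ {ω : ι → Bool | ∀ e ∈ T, ω e = false} = ∏ e ∈ T, μ e {false} := by
  have hset : {ω : ι → Bool | ∀ e ∈ T, ω e = false} =
      Set.pi Set.univ (fun e => if e ∈ T then {false} else Set.univ) := by
    ext ω
    simp only [Set.mem_setOf_eq, Set.mem_pi, Set.mem_univ, forall_true_left]
    constructor
    · intro h e; by_cases he : e ∈ T <;> simp [he, h e]
    · intro h e he; have := h e; simpa [he] using this
  rw [hset, Measure.pi_pi]
  have : ∀ e : ι, μ e (if e ∈ T then ({false} : Set Bool) else Set.univ)
      = if e ∈ T then μ e {false} else 1 := by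
    intro e
    by_cases he : e ∈ T
    · rw [if_pos he, if_pos he]
    · rw [if_neg he, if_neg he]; exact measure_univ
  simp_rw [this]
  rw [Finset.prod_ite_mem Finset.univ T (fun e => μ e {false}), Finset.univ_inter]
lemma disconnected_witness {V : Type*} [Fintype V] (S : Set (Sym2 V))
    (ω : Sym2 V → Bool) [Nonempty V] (h : ¬ (selectGraph S ω).Connected) :
    ∃ U : Finset V, U.Nonempty ∧ U ≠ Finset.univ ∧
      ∀ a b, a ∈ U → b ∉ U → s(a,b) ∈ S → ω s(a,b) = false := by
  classical
  rw [SimpleGraph.connected_iff] at h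
  push_neg at h
  have hpre : ¬ (selectGraph S ω).Preconnected := fun hh => (h hh).false (Classical.choice ‹_›)
  rw [SimpleGraph.Preconnected] at hpre
  push_neg at hpre
  obtain ⟨a, b, hab⟩ := hpre
  refine ⟨Finset.univ.filter (fun v => (selectGraph S ω).Reachable a v), ⟨a, by simp [SimpleGraph.Reachable.refl]⟩, ?_, ?_⟩
  · intro he
    exact hab (by have := Finset.mem_univ b; rw [← he, Finset.mem_filter] at this; exact this.2)
  · intro x y hx hy hS
    by_contra hω
    rw [Bool.not_eq_false] at hω
    simp only [Finset.mem_filter, Finset.mem_univ, true_and] at hx hy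
    have hne : x ≠ y := fun e => hy (e ▸ hx)
    exact hy (hx.trans (SimpleGraph.Adj.reachable (⟨hne, hS, hω⟩ : x ≠ y ∧ s(x, y) ∈ S ∧ ω s(x, y) = true)))
open Classical in
noncomputable def crossFinset {V : Type*} [Fintype V] (G : SimpleGraph V) (U : Finset V) :
    Finset (Sym2 V) :=
  (Finset.univ.filter (fun q : V × V => q.1 ∈ U ∧ q.2 ∉ U ∧ G.Adj q.1 q.2)).image
    (fun q => s(q.1, q.2))

open Classical in
lemma crossFinset_card {V : Type*} [Fintype V] (G : SimpleGraph V) (U : Finset V) :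
    (crossFinset G U).card = Nat.card (crossPairs G (↑U : Set V)) := by
  have h1 : crossPairs G (↑U : Set V) =
      ↑(Finset.univ.filter (fun q : V × V => q.1 ∈ U ∧ q.2 ∉ U ∧ G.Adj q.1 q.2)) := by
    ext q; simp [crossPairs]
  rw [Nat.card_coe_set_eq, h1, Set.ncard_coe_finset, crossFinset]
  apply Finset.card_image_of_injOn
  intro q hq r hr he
  simp only [Finset.mem_coe, Finset.mem_filter] at hq hr
  rw [Sym2.eq_iff] at he
  rcases he with ⟨h1, h2⟩ | ⟨h1, h2⟩
  · exact Prod.ext h1 h2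
  · exact absurd (h1 ▸ hq.2.1) hr.2.2.1

lemma crossFinset_mem {V : Type*} [Fintype V] (G : SimpleGraph V) (U : Finset V)
    {e : Sym2 V} (he : e ∈ crossFinset G U) :
    e ∈ G.edgeSet ∧ ∃ a b, a ∈ U ∧ b ∉ U ∧ e = s(a, b) := by
  simp only [crossFinset, Finset.mem_image, Finset.mem_filter, Finset.mem_univ, true_and] at he
  obtain ⟨q, ⟨h1, h2, h3⟩, rfl⟩ := he
  exact ⟨h3, q.1, q.2, h1, h2, rfl⟩

lemma minmax_prod {n k : ℕ} (hk : k ≤ n) :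
    (k : ℝ) * ((n : ℝ) - k) = (min k (n - k) : ℕ) * ((n : ℝ) - (min k (n - k) : ℕ)) := by
  rcases le_total k (n - k) with h | h
  · rw [min_eq_left h]
  · rw [min_eq_right h, Nat.cast_sub hk]; ring

lemma per_cut_bound {n k c : ℕ} {α : ℝ} (hα : 0 < α) (hn : 2 ≤ n) (hk1 : 1 ≤ k)
    (hk2 : k ≤ n - 1) (hp1 : 10 * Real.log n / (α * n) ≤ 1)
    (hc : α * k * ((n : ℝ) - k) ≤ c) :
    (1 - 10 * Real.log n / (α * n)) ^ c ≤ ((n : ℝ) ^ (5 * min k (n - k)))⁻¹ := by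
  set p : ℝ := 10 * Real.log n / (α * n) with hpdef
  have hn0 : (0 : ℝ) < n := by positivity
  have hlog : 0 ≤ Real.log n := Real.log_nonneg (by exact_mod_cast (by omega : 1 ≤ n))
  have hp0 : 0 ≤ p := by positivity
  set m : ℕ := min k (n - k) with hmdef
  have hm1 : 1 ≤ m := le_min hk1 (by omega)
  have h2m : 2 * m ≤ n := by omega
  have hkn : k ≤ n := by omega
  -- step 1 : (1-p)^c ≤ exp (-(c*p))
  have s1 : (1 - p) ^ c ≤ Real.exp (-(c * p)) := by
    calc (1 - p) ^ c ≤ Real.exp (-p) ^ c :=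
          pow_le_pow_left₀ (by linarith) (by linarith [Real.add_one_le_exp (-p)]) c
      _ = Real.exp (c * (-p)) := (Real.exp_nat_mul _ c).symm
      _ = Real.exp (-(c * p)) := by ring_nf
  -- step 2 : 5 * m * log n ≤ c * p
  have s2 : 5 * (m : ℝ) * Real.log n ≤ c * p := by
    have hmm : (m : ℝ) * ((n : ℝ) / 2) ≤ (k : ℝ) * ((n : ℝ) - k) := by
      rw [minmax_prod hkn, ← hmdef]
      have : (n : ℝ) / 2 ≤ (n : ℝ) - m := by
        have : (2 : ℝ) * m ≤ n := by exact_mod_cast h2m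
        linarith
      nlinarith [Nat.cast_nonneg (α := ℝ) m]
    have hcm : α * (m * ((n : ℝ) / 2)) ≤ c := by
      calc α * (m * ((n : ℝ) / 2)) ≤ α * ((k : ℝ) * ((n : ℝ) - k)) := by
            exact mul_le_mul_of_nonneg_left hmm hα.le
        _ = α * k * ((n : ℝ) - k) := by ring
        _ ≤ c := hc
    calc 5 * (m : ℝ) * Real.log n = (α * (m * ((n : ℝ) / 2))) * p := by
          rw [hpdef]; field_simp; ring
      _ ≤ c * p := mul_le_mul_of_nonneg_right hcm hp0
  -- step 3 : conclude
  calc (1 - p) ^ c ≤ Real.exp (-(c * p)) := s1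
    _ ≤ Real.exp (-(5 * m * Real.log n)) := Real.exp_le_exp.2 (by linarith)
    _ = ((n : ℝ) ^ (5 * m))⁻¹ := by
        rw [Real.exp_neg]
        congr 1
        have : (5 : ℝ) * m * Real.log n = ((5 * m : ℕ) : ℝ) * Real.log n := by push_cast; ring
        rw [this, Real.exp_nat_mul, Real.exp_log hn0]

lemma choose_le_pow_min {n k : ℕ} (hk : k ≤ n) :
    (n.choose k : ℝ) ≤ (n : ℝ) ^ (min k (n - k)) := by
  rcases le_total k (n - k) with h | h
  · rw [min_eq_left h]; exact_mod_cast Nat.choose_le_pow n k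
  · rw [min_eq_right h, ← Nat.choose_symm hk]
    exact_mod_cast Nat.choose_le_pow n (n - k)

lemma sum_cut_bound {V : Type*} [Fintype V] [DecidableEq V] (g : Finset V → ℝ)
    (hn : 2 ≤ Fintype.card V)
    (hg : ∀ U : Finset V, U.Nonempty → U ≠ Finset.univ →
      g U ≤ ((Fintype.card V : ℝ) ^
        (5 * min U.card (Fintype.card V - U.card)))⁻¹)
    (hg0 : ∀ U, 0 ≤ g U) :
    ∑ U ∈ Finset.univ.filter (fun U : Finset V => U.Nonempty ∧ U ≠ Finset.univ), g U
      ≤ 2 / (Fintype.card V : ℝ) ^ 3 := by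
  set n := Fintype.card V with hndef
  have hn0 : (0 : ℝ) < n := by positivity
  have hn1 : (1 : ℝ) ≤ n := by exact_mod_cast (by omega : 1 ≤ n)
  set B : Finset (Finset V) :=
    (Finset.Icc 1 (n - 1)).biUnion (fun k => Finset.powersetCard k Finset.univ) with hBdef
  have hmemB : ∀ U ∈ B, U.Nonempty ∧ U ≠ Finset.univ := by
    intro U hU
    simp only [hBdef, Finset.mem_biUnion, Finset.mem_Icc, Finset.mem_powersetCard] at hU
    obtain ⟨k, ⟨hk1, hk2⟩, _, hcard⟩ := hU
    constructor
    · rw [← Finset.card_pos, hcard]; omega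
    · intro h
      rw [h, Finset.card_univ, ← hndef] at hcard
      omega
  have hsub : Finset.univ.filter (fun U : Finset V => U.Nonempty ∧ U ≠ Finset.univ) ⊆ B := by
    intro U hU
    simp only [Finset.mem_filter, Finset.mem_univ, true_and] at hU
    simp only [hBdef, Finset.mem_biUnion, Finset.mem_Icc, Finset.mem_powersetCard]
    refine ⟨U.card, ⟨Finset.card_pos.2 hU.1, ?_⟩, Finset.subset_univ U, rfl⟩
    have := Finset.card_lt_card (Finset.ssubset_univ_iff.2 hU.2)
    rw [Finset.card_univ, ← hndef] at this
    omega
  calc ∑ U ∈ Finset.univ.filter (fun U : Finset V => U.Nonempty ∧ U ≠ Finset.univ), g U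
      ≤ ∑ U ∈ B, g U := Finset.sum_le_sum_of_subset_of_nonneg hsub (fun U _ _ => hg0 U)
    _ = ∑ k ∈ Finset.Icc 1 (n - 1), ∑ U ∈ Finset.powersetCard k Finset.univ, g U := by
        rw [hBdef, Finset.sum_biUnion]
        intro a _ b _ hab
        simp only [Function.onFun]
        rw [Finset.disjoint_left]
        intro U hUa hUb
        rw [Finset.mem_powersetCard] at hUa hUb
        exact hab (hUa.2 ▸ hUb.2)
    _ ≤ ∑ k ∈ Finset.Icc 1 (n - 1), ((n : ℝ) ^ 4)⁻¹ := by
        apply Finset.sum_le_sum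
        intro k hk
        rw [Finset.mem_Icc] at hk
        have hkn : k ≤ n := by omega
        have hm1 : 1 ≤ min k (n - k) := le_min hk.1 (by omega)
        calc ∑ U ∈ Finset.powersetCard k Finset.univ, g U
            ≤ ∑ U ∈ Finset.powersetCard k Finset.univ,
                ((n : ℝ) ^ (5 * min k (n - k)))⁻¹ := by
              apply Finset.sum_le_sum
              intro U hU
              rw [Finset.mem_powersetCard] at hU
              have h1 := (hmemB U (by
                simp only [hBdef, Finset.mem_biUnion, Finset.mem_Icc, Finset.mem_powersetCard]
                exact ⟨k, ⟨hk.1, hk.2⟩, hU⟩))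
              have := hg U h1.1 h1.2
              rwa [hU.2] at this
          _ = (n.choose k : ℝ) * ((n : ℝ) ^ (5 * min k (n - k)))⁻¹ := by
              rw [Finset.sum_const, Finset.card_powersetCard, Finset.card_univ, ← hndef,
                nsmul_eq_mul]
          _ ≤ (n : ℝ) ^ (min k (n - k)) * ((n : ℝ) ^ (5 * min k (n - k)))⁻¹ := by
              apply mul_le_mul_of_nonneg_right (choose_le_pow_min hkn) (by positivity)
          _ = ((n : ℝ) ^ (4 * min k (n - k)))⁻¹ := by
              have hne : (n:ℝ) ≠ 0 := ne_of_gt hn0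
              field_simp
              rw [← pow_add]
              congr 1
              omega
          _ ≤ ((n : ℝ) ^ 4)⁻¹ := by
              apply inv_anti₀ (by positivity)
              apply pow_le_pow_right₀ hn1
              omega
    _ ≤ 2 / (n : ℝ) ^ 3 := by
        rw [Finset.sum_const, Nat.card_Icc, nsmul_eq_mul]
        have h1 : ((n - 1 + 1 - 1 : ℕ) : ℝ) ≤ n := by
          have : n - 1 + 1 - 1 ≤ n := by omega
          exact_mod_cast this
        rw [div_eq_mul_inv]
        have h2 : ((n:ℝ) ^ 4)⁻¹ = (n:ℝ)⁻¹ * ((n:ℝ)^3)⁻¹ := by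
          rw [← mul_inv]; congr 1; ring
        rw [h2]
        calc ((n - 1 + 1 - 1 : ℕ) : ℝ) * ((n:ℝ)⁻¹ * ((n:ℝ)^3)⁻¹)
            ≤ (n : ℝ) * ((n:ℝ)⁻¹ * ((n:ℝ)^3)⁻¹) := by
              apply mul_le_mul_of_nonneg_right h1 (by positivity)
          _ = ((n:ℝ) * (n:ℝ)⁻¹) * ((n:ℝ)^3)⁻¹ := by ring
          _ ≤ 2 * ((n:ℝ)^3)⁻¹ := by
              rw [mul_inv_cancel₀ (ne_of_gt hn0)]
              nlinarith [inv_pos.2 (pow_pos hn0 3)]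
instance instMSC {ι : Type*} [Countable ι] : MeasurableSingletonClass (ι → Bool) := by
  constructor
  intro ω
  have : {ω} = Set.pi Set.univ (fun e => {ω e}) := by
    ext ω'; simp [funext_iff, Set.mem_pi]
  rw [this]
  exact MeasurableSet.univ_pi (fun e => measurableSet_singleton _)


set_option maxHeartbeats 2000000 in
open Classical in
/-- A random subgraph of an `α`-robust graph `H` on `n ≥ 2` vertices, keeping each edge
independently with probability `10·log n/(α·n) (≤ 1)`, is connected with probability at
least `1 − 2n⁻³`. -/
theorem random_subgraph_of_robust_connected {V : Type*} [Fintype V] [DecidableEq V]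
    (α : ℝ) (hα : 0 < α) (H : SimpleGraph V) (hn : 2 ≤ Fintype.card V)
    (hrob : IsRobust α H)
    (hp : 10 * Real.log (Fintype.card V) / (α * (Fintype.card V : ℝ)) ≤ 1) :
    1 - 2 / (Fintype.card V : ENNReal) ^ 3 ≤
      (Measure.pi (fun e : Sym2 V =>
          if e ∈ H.edgeSet
          then bernoulliMeasure (10 * Real.log (Fintype.card V) / (α * (Fintype.card V : ℝ)))
          else Measure.dirac false))
        {ω : Sym2 V → Bool | (selectGraph H.edgeSet ω).Connected} := by
  have hVne : Nonempty V := Fintype.card_pos_iff.mp (by omega)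
  set n := Fintype.card V with hndef
  set p : ℝ := 10 * Real.log n / (α * n) with hpdef
  have hn0 : (0 : ℝ) < n := by positivity
  have hlog : 0 ≤ Real.log n := Real.log_nonneg (by exact_mod_cast (by omega : 1 ≤ n))
  have hp0 : 0 ≤ p := by positivity
  set μs : Sym2 V → Measure Bool := fun e =>
    if e ∈ H.edgeSet then bernoulliMeasure p else Measure.dirac false with hμsdef
  haveI hprob : ∀ e, IsProbabilityMeasure (μs e) := by
    intro e
    simp only [hμsdef]
    by_cases he : e ∈ H.edgeSet
    · rw [if_pos he]; exact bernoulli_isProb hp0 hp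
    · rw [if_neg he]; infer_instance
  set μ := Measure.pi μs with hμdef
  haveI : IsProbabilityMeasure μ := by rw [hμdef]; infer_instance
  -- all sets are measurable (finite discrete space)
  have hms : ∀ s : Set (Sym2 V → Bool), MeasurableSet s := fun s =>
    Set.Finite.measurableSet (Set.toFinite s)
  -- the bad event and its per-cut decomposition
  set S : Finset (Finset V) :=
    Finset.univ.filter (fun U : Finset V => U.Nonempty ∧ U ≠ Finset.univ) with hSdef
  set E : Finset V → Set (Sym2 V → Bool) :=
    fun U => {ω | ∀ e ∈ crossFinset H U, ω e = false} with hEdef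
  have hsub : {ω : Sym2 V → Bool | (selectGraph H.edgeSet ω).Connected}ᶜ ⊆
      ⋃ U ∈ S, E U := by
    intro ω hω
    simp only [Set.mem_compl_iff, Set.mem_setOf_eq] at hω
    obtain ⟨U, hU1, hU2, hU3⟩ := disconnected_witness H.edgeSet ω hω
    have hUS : U ∈ S := by
      rw [hSdef, Finset.mem_filter]; exact ⟨Finset.mem_univ U, hU1, hU2⟩
    refine Set.mem_biUnion hUS ?_
    intro e he
    obtain ⟨_, a, b, ha, hb, rfl⟩ := crossFinset_mem H U he
    exact hU3 a b ha hb (crossFinset_mem H U he).1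
  -- measure of each cut event
  have hEbound : ∀ U ∈ S, μ (E U) ≤
      ENNReal.ofReal ((1 - p) ^ (crossFinset H U).card) := by
    intro U _
    have : μ (E U) = ∏ e ∈ crossFinset H U, μs e {false} := pi_allFalse μs _
    rw [this]
    have heach : ∀ e ∈ crossFinset H U, μs e {false} = ENNReal.ofReal (1 - p) := by
      intro e he
      simp only [hμsdef]
      rw [if_pos (crossFinset_mem H U he).1]
      exact bernoulli_false hp0 hp
    rw [Finset.prod_congr rfl heach, Finset.prod_const, ← ENNReal.ofReal_pow (by linarith)]
  -- real-valued per-cut bound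
  have hreal : ∀ U ∈ S, (1 - p) ^ (crossFinset H U).card ≤
      ((n : ℝ) ^ (5 * min U.card (n - U.card)))⁻¹ := by
    intro U hU
    simp only [hSdef, Finset.mem_filter, Finset.mem_univ, true_and] at hU
    have hk1 : 1 ≤ U.card := Finset.card_pos.2 hU.1
    have hk2 : U.card ≤ n - 1 := by
      have := Finset.card_lt_card (Finset.ssubset_univ_iff.2 hU.2)
      rw [Finset.card_univ, ← hndef] at this
      omega
    apply per_cut_bound hα hn hk1 hk2 hp
    have h1 := hrob (↑U : Set V)
    rw [Nat.card_coe_set_eq, Set.ncard_coe_finset] at h1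
    rw [crossFinset_card]
    exact h1
  -- combine
  have hbad : μ {ω : Sym2 V → Bool | (selectGraph H.edgeSet ω).Connected}ᶜ
      ≤ 2 / (n : ENNReal) ^ 3 := by
    calc μ {ω : Sym2 V → Bool | (selectGraph H.edgeSet ω).Connected}ᶜ
        ≤ μ (⋃ U ∈ S, E U) := measure_mono hsub
      _ ≤ ∑ U ∈ S, μ (E U) := measure_biUnion_finset_le S E
      _ ≤ ∑ U ∈ S, ENNReal.ofReal ((1 - p) ^ (crossFinset H U).card) :=
          Finset.sum_le_sum hEbound
      _ = ENNReal.ofReal (∑ U ∈ S, (1 - p) ^ (crossFinset H U).card) :=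
          (ENNReal.ofReal_sum_of_nonneg (fun U _ => pow_nonneg (by linarith) _)).symm
      _ ≤ ENNReal.ofReal (2 / (n : ℝ) ^ 3) := by
          apply ENNReal.ofReal_le_ofReal
          have := sum_cut_bound (fun U => (1 - p) ^ (crossFinset H U).card) hn
            (fun U h1 h2 => hreal U (by rw [hSdef, Finset.mem_filter]; exact ⟨Finset.mem_univ U, h1, h2⟩)) (fun U => pow_nonneg (by linarith) _)
          rw [hSdef]
          exact this
      _ = 2 / (n : ENNReal) ^ 3 := by
          rw [ENNReal.ofReal_div_of_pos (by positivity), ENNReal.ofReal_pow (by positivity),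
            ENNReal.ofReal_natCast, ENNReal.ofReal_ofNat]
  have hfinal := measure_compl (μ := μ)
    (hms {ω : Sym2 V → Bool | (selectGraph H.edgeSet ω).Connected}) (measure_ne_top μ _)
  have : μ {ω : Sym2 V → Bool | (selectGraph H.edgeSet ω).Connected}
      = 1 - μ {ω : Sym2 V → Bool | (selectGraph H.edgeSet ω).Connected}ᶜ := by
    rw [hfinal, measure_univ]
    rw [ENNReal.sub_sub_cancel (by norm_num) prob_le_one]
  rw [this]
  exact tsub_le_tsub_left hbad 1
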